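/- Let G₁ = (V₁, E₁) and G₂ = (V₂, E₂) be graphs and let φ : V₁ → V₂ be an (α, β)-quasi-isometry with α, β ≥ 1. Let u, v ∈ V₁ and suppose x, y ∈ V₂ satisfy d(x, φ(u)) ≤ β and d(y, φ(v)) ≤ β. Then for each path γ' from x to y in G₂ there exists a path γ from u to v in G₁ such that len(γ) ≤ 10α(len(γ') + β) and φ(B_r(γ)) ⊆ B_{αr + (5α² + 2)β}(γ') for every r ≥ 0. -/
import Mathlib

open SimpleGraph

private lemma aux_length_drop {V : Type} {G : SimpleGraph V} :
    ∀ {x y : V} (p : G.Walk x y) (n : ℕ), (p.drop n).length = p.length - n := by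
  intro x y p
  induction p with
  | nil => intro n; cases n <;> simp [Walk.drop]
  | cons h q ih =>
    intro n
    cases n with
    | zero => simp [Walk.drop]
    | succ n => simp [Walk.drop, ih n]

private lemma aux_support_drop {V : Type} {G : SimpleGraph V} :
    ∀ {x y : V} (p : G.Walk x y) (n : ℕ) (w : V), w ∈ (p.drop n).support → w ∈ p.support := by
  intro x y p
  induction p with
  | nil => intro n w hw; cases n <;> simpa [Walk.drop] using hw
  | cons h q ih =>
    intro n w hw
    cases n with
    | zero => simpa [Walk.drop] using hw
    | succ n =>
      simp only [Walk.drop, Walk.support_copy] at hw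
      simp only [Walk.support_cons, List.mem_cons]
      exact Or.inr (ih n w hw)

private lemma aux_exists_walk_getVert {V : Type} {G : SimpleGraph V} :
    ∀ {x y : V} (p : G.Walk x y) (n : ℕ), ∃ q : G.Walk x (p.getVert n), q.length ≤ n := by
  intro x y p
  induction p with
  | nil =>
    intro n
    exact ⟨(Walk.nil).copy rfl rfl, by simp⟩
  | cons h q ih =>
    intro n
    cases n with
    | zero =>
      exact ⟨(Walk.nil).copy rfl (Walk.getVert_zero _).symm, by simp⟩
    | succ n =>
      obtain ⟨q', hq'⟩ := ih n
      refine ⟨(Walk.cons h q').copy rfl (Walk.getVert_cons_succ _ h).symm, ?_⟩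
      simpa using Nat.succ_le_succ hq'

private lemma aux_key (V₁ V₂ : Type) (G₁ : SimpleGraph V₁) (G₂ : SimpleGraph V₂)
    (h₁ : G₁.Connected) (h₂ : G₂.Connected)
    (α β : ℝ) (hα : 1 ≤ α) (hβ : 1 ≤ β) (φ : V₁ → V₂)
    (hQI : ∀ a b : V₁, (G₁.dist a b : ℝ) / α - β ≤ (G₂.dist (φ a) (φ b) : ℝ) ∧
      (G₂.dist (φ a) (φ b) : ℝ) ≤ α * (G₁.dist a b : ℝ) + β)
    (hQIsurj : ∀ z : V₂, ∃ a : V₁, (G₂.dist z (φ a) : ℝ) ≤ β)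
    (v : V₁) (y : V₂) (hy : (G₂.dist y (φ v) : ℝ) ≤ β) :
    ∀ n : ℕ, ∀ (x : V₂) (u : V₁), (G₂.dist x (φ u) : ℝ) ≤ β →
      ∀ γ' : G₂.Walk x y, γ'.length ≤ n →
      ∃ γ : G₁.Walk u v, (γ.length : ℝ) ≤ 5 * α * ((γ'.length : ℝ) + β) ∧
        ∀ w ∈ γ.support, ∃ w' ∈ γ'.support, ∃ a : V₁,
          (G₂.dist w' (φ a) : ℝ) ≤ β ∧ (G₁.dist a w : ℝ) ≤ 5 * α * β := by
  have hα0 : (0:ℝ) < α := by linarith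
  classical
  intro n
  induction n using Nat.strong_induction_on with
  | _ n IH =>
  intro x u hx γ' hlen
  set b : ℕ := ⌈β⌉₊ with hb
  have hbβ : (β:ℝ) ≤ b := Nat.le_ceil β
  have hbβ' : (b:ℝ) ≤ β + 1 := le_of_lt (Nat.ceil_lt_add_one (by linarith))
  have hb1 : 1 ≤ b := Nat.one_le_iff_ne_zero.mpr (by
    intro h0
    rw [h0] at hbβ
    push_cast at hbβ
    linarith)
  by_cases hcase : γ'.length ≤ b
  · -- base case: take a geodesic from u to v
    have hdφ : (G₂.dist (φ u) (φ v) : ℝ) ≤ 4 * β := by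
      have t1 : G₂.dist (φ u) (φ v) ≤ G₂.dist (φ u) x + G₂.dist x (φ v) :=
        h₂.dist_triangle
      have t2 : G₂.dist x (φ v) ≤ G₂.dist x y + G₂.dist y (φ v) := h₂.dist_triangle
      have t3 : G₂.dist x y ≤ γ'.length := dist_le γ'
      have t4 : G₂.dist (φ u) x = G₂.dist x (φ u) := dist_comm
      have t5 : (γ'.length : ℝ) ≤ (b : ℝ) := by exact_mod_cast hcase
      have t1' : (G₂.dist (φ u) (φ v) : ℝ) ≤ (G₂.dist (φ u) x : ℝ) + (G₂.dist x (φ v) : ℝ) := by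
        exact_mod_cast t1
      have t2' : (G₂.dist x (φ v) : ℝ) ≤ (G₂.dist x y : ℝ) + (G₂.dist y (φ v) : ℝ) := by
        exact_mod_cast t2
      have t3' : (G₂.dist x y : ℝ) ≤ (γ'.length : ℝ) := by exact_mod_cast t3
      rw [t4] at t1'
      linarith
    have hd1 : (G₁.dist u v : ℝ) ≤ 5 * α * β := by
      have h := (hQI u v).1
      have : (G₁.dist u v : ℝ) / α ≤ 5 * β := by linarith
      calc (G₁.dist u v : ℝ) = (G₁.dist u v : ℝ) / α * α := by field_simp
        _ ≤ 5 * β * α := mul_le_mul_of_nonneg_right this (le_of_lt hα0)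
        _ = 5 * α * β := by ring
    obtain ⟨p, hp⟩ := h₁.exists_walk_length_eq_dist u v
    refine ⟨p, ?_, ?_⟩
    · have hlen0 : (0:ℝ) ≤ (γ'.length : ℝ) := Nat.cast_nonneg _
      have : (p.length : ℝ) = (G₁.dist u v : ℝ) := by exact_mod_cast hp
      nlinarith
    · intro w hw
      refine ⟨x, γ'.start_mem_support, u, hx, ?_⟩
      have h5 : G₁.dist u w ≤ (p.takeUntil w hw).length := dist_le _
      have h6 := Walk.length_takeUntil_le p hw
      have : (G₁.dist u w : ℝ) ≤ (p.length : ℝ) := by exact_mod_cast le_trans h5 h6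
      rw [hp] at this
      exact le_trans this hd1
  · -- inductive step: peel off b edges
    push_neg at hcase
    set q : V₂ := γ'.getVert b with hq
    obtain ⟨u₁, hu₁⟩ := hQIsurj q
    obtain ⟨pq, hpq⟩ := aux_exists_walk_getVert γ' b
    have hxq : (G₂.dist x q : ℝ) ≤ (b : ℝ) := by
      have := le_trans (dist_le pq) hpq
      exact_mod_cast this
    have hdφ : (G₂.dist (φ u) (φ u₁) : ℝ) ≤ 4 * β := by
      have t1 : G₂.dist (φ u) (φ u₁) ≤ G₂.dist (φ u) x + G₂.dist x (φ u₁) :=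
        h₂.dist_triangle
      have t2 : G₂.dist x (φ u₁) ≤ G₂.dist x q + G₂.dist q (φ u₁) := h₂.dist_triangle
      have t4 : G₂.dist (φ u) x = G₂.dist x (φ u) := dist_comm
      have t1' : (G₂.dist (φ u) (φ u₁) : ℝ) ≤ (G₂.dist (φ u) x : ℝ) + (G₂.dist x (φ u₁) : ℝ) := by
        exact_mod_cast t1
      have t2' : (G₂.dist x (φ u₁) : ℝ) ≤ (G₂.dist x q : ℝ) + (G₂.dist q (φ u₁) : ℝ) := by
        exact_mod_cast t2
      rw [t4] at t1'
      linarith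
    have hd1 : (G₁.dist u u₁ : ℝ) ≤ 5 * α * β := by
      have h := (hQI u u₁).1
      have : (G₁.dist u u₁ : ℝ) / α ≤ 5 * β := by linarith
      calc (G₁.dist u u₁ : ℝ) = (G₁.dist u u₁ : ℝ) / α * α := by field_simp
        _ ≤ 5 * β * α := mul_le_mul_of_nonneg_right this (le_of_lt hα0)
        _ = 5 * α * β := by ring
    obtain ⟨σ, hσ⟩ := h₁.exists_walk_length_eq_dist u u₁
    set τ : G₂.Walk q y := γ'.drop b with hτ
    have hτlen : τ.length = γ'.length - b := aux_length_drop γ' b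
    have hτlt : τ.length < n := by omega
    obtain ⟨γ₁, hγ₁len, hγ₁tube⟩ := IH τ.length hτlt q u₁ hu₁ τ le_rfl
    refine ⟨σ.append γ₁, ?_, ?_⟩
    · rw [Walk.length_append]
      have hσr : (σ.length : ℝ) ≤ 5 * α * β := by
        rw [hσ] at *
        exact_mod_cast hd1
      have hτr : (τ.length : ℝ) = (γ'.length : ℝ) - (b : ℝ) := by
        rw [hτlen]
        have : b ≤ γ'.length := le_of_lt hcase
        push_cast [this]
        ring
      push_cast
      rw [hτr] at hγ₁len
      nlinarith
    · intro w hw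
      rcases (Walk.mem_support_append_iff σ γ₁).mp hw with h | h
      · refine ⟨x, γ'.start_mem_support, u, hx, ?_⟩
        have h5 : G₁.dist u w ≤ (σ.takeUntil w h).length := dist_le _
        have h6 := Walk.length_takeUntil_le σ h
        have h7 : (G₁.dist u w : ℝ) ≤ (σ.length : ℝ) := by exact_mod_cast le_trans h5 h6
        rw [hσ] at h7
        exact le_trans h7 hd1
      · obtain ⟨w', hw', a, ha1, ha2⟩ := hγ₁tube w h
        exact ⟨w', aux_support_drop γ' b w' hw', a, ha1, ha2⟩

theorem quasi_isometry_tube_pullback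
    (V₁ V₂ : Type) (G₁ : SimpleGraph V₁) (G₂ : SimpleGraph V₂)
    (h₁ : G₁.Connected) (h₂ : G₂.Connected)
    (α β : ℝ) (hα : 1 ≤ α) (hβ : 1 ≤ β) (φ : V₁ → V₂)
    (hQI : ∀ a b : V₁, (G₁.dist a b : ℝ) / α - β ≤ (G₂.dist (φ a) (φ b) : ℝ) ∧
      (G₂.dist (φ a) (φ b) : ℝ) ≤ α * (G₁.dist a b : ℝ) + β)
    (hQIsurj : ∀ z : V₂, ∃ a : V₁, (G₂.dist z (φ a) : ℝ) ≤ β)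
    (u v : V₁) (x y : V₂)
    (hx : (G₂.dist x (φ u) : ℝ) ≤ β) (hy : (G₂.dist y (φ v) : ℝ) ≤ β)
    (γ' : G₂.Walk x y) :
    ∃ γ : G₁.Walk u v, (γ.length : ℝ) ≤ 10 * α * ((γ'.length : ℝ) + β) ∧
      ∀ r : ℝ, 0 ≤ r → ∀ z : V₁, (∃ w ∈ γ.support, (G₁.dist w z : ℝ) ≤ r) →
        ∃ w' ∈ γ'.support, (G₂.dist w' (φ z) : ℝ) ≤ α * r + (5 * α ^ 2 + 2) * β := by
  obtain ⟨γ, hlen, htube⟩ :=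
    aux_key V₁ V₂ G₁ G₂ h₁ h₂ α β hα hβ φ hQI hQIsurj v y hy γ'.length x u hx γ' le_rfl
  have hα0 : (0:ℝ) < α := by linarith
  refine ⟨γ, ?_, ?_⟩
  · have hlen0 : (0:ℝ) ≤ (γ'.length : ℝ) := Nat.cast_nonneg _
    nlinarith
  · rintro r hr z ⟨w, hwsup, hwz⟩
    obtain ⟨w', hw', a, ha1, ha2⟩ := htube w hwsup
    have t1 : G₁.dist a z ≤ G₁.dist a w + G₁.dist w z := h₁.dist_triangle
    have t1' : (G₁.dist a z : ℝ) ≤ 5 * α * β + r := by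
      have : (G₁.dist a z : ℝ) ≤ (G₁.dist a w : ℝ) + (G₁.dist w z : ℝ) := by exact_mod_cast t1
      linarith
    have t2 := (hQI a z).2
    have t2' : (G₂.dist (φ a) (φ z) : ℝ) ≤ α * (5 * α * β + r) + β := by
      have := mul_le_mul_of_nonneg_left t1' (le_of_lt hα0)
      linarith
    have t3 : G₂.dist w' (φ z) ≤ G₂.dist w' (φ a) + G₂.dist (φ a) (φ z) := h₂.dist_triangle
    have t3' : (G₂.dist w' (φ z) : ℝ) ≤ (G₂.dist w' (φ a) : ℝ) + (G₂.dist (φ a) (φ z) : ℝ) := by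
      exact_mod_cast t3
    refine ⟨w', hw', ?_⟩
    have hsq : α * (5 * α * β) = 5 * α ^ 2 * β := by ring
    nlinarith
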